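/- Let c ∈ ℝ, let A₀, A₃ : ℝ → ℝ be twice continuously differentiable, and let μ : ℝ → ℝ satisfy, for all u, v ∈ ℝ, the functional equation μ(v) − μ(u) = A₀(u−v) − c·(A₀(u−v)·u + A₃(u−v)). Then there exists a constant c₀ such that A₀(τ) = c₀·τ for all τ ∈ ℝ. Moreover, if c ≠ 0, there exist constants c₃₁ and k such that A₃(τ) = −(c₀/2)·τ² + c₃₁·τ for all τ, and μ(w) = (c·c₀/2)·w² + (c·c₃₁ − c₀)·w + k for all w. -/
import Mathlib

lemma lin_of_add {f : ℝ → ℝ} (hf : Continuous f)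
    (hadd : ∀ x y : ℝ, f (x + y) = f x + f y) : ∀ x : ℝ, f x = f 1 * x := by
  intro x
  let F : ℝ →+ ℝ := AddMonoidHom.mk' f hadd
  let L := AddMonoidHom.toRealLinearMap F hf
  have hL : ∀ y : ℝ, L y = f y := fun y => rfl
  have := L.map_smul x 1
  simp only [smul_eq_mul, mul_one] at this
  rw [hL, hL] at this
  rw [this]; ring

/-- If `μ(v) − μ(u) = A₀(u−v) − c·(A₀(u−v)·u + A₃(u−v))` for all `u, v`, then
`A₀(τ) = c₀·τ`, and when `c ≠ 0` also `A₃(τ) = −(c₀/2)τ² + c₃₁τ` and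
`μ(w) = (c·c₀/2)w² + (c·c₃₁ − c₀)w + k`. -/
theorem stmt1 (c : ℝ) (A0 A3 μ : ℝ → ℝ)
    (hA0 : ContDiff ℝ 2 A0) (hA3 : ContDiff ℝ 2 A3)
    (h : ∀ u v : ℝ, μ v - μ u = A0 (u - v) - c * (A0 (u - v) * u + A3 (u - v))) :
    ∃ c0 : ℝ, (∀ τ : ℝ, A0 τ = c0 * τ) ∧
      (c ≠ 0 → ∃ c31 k : ℝ,
        (∀ τ : ℝ, A3 τ = -(c0 / 2) * τ ^ 2 + c31 * τ) ∧
        (∀ w : ℝ, μ w = (c * c0 / 2) * w ^ 2 + (c * c31 - c0) * w + k)) := by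
  have key : ∀ u τ σ : ℝ,
      A0 (τ + σ) - c * (A0 (τ + σ) * u + A3 (τ + σ)) =
        (A0 σ - c * (A0 σ * (u - τ) + A3 σ)) + (A0 τ - c * (A0 τ * u + A3 τ)) := by
    intro u τ σ
    have h1 := h u (u - τ - σ)
    have h2 := h u (u - τ)
    have h3 := h (u - τ) (u - τ - σ)
    have e1 : u - (u - τ - σ) = τ + σ := by ring
    have e2 : u - (u - τ) = τ := by ring
    have e3 : (u - τ) - (u - τ - σ) = σ := by ring
    rw [e1] at h1; rw [e2] at h2; rw [e3] at h3
    linarith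
  have add0 : ∀ τ σ : ℝ, A0 (τ + σ) = A0 τ + A0 σ := by
    intro τ σ
    by_cases hc : c = 0
    · have k0 := key 0 τ σ
      rw [hc] at k0
      linarith
    · have k0 := key 0 τ σ
      have k1 := key 1 τ σ
      have hmul : c * A0 (τ + σ) = c * (A0 τ + A0 σ) := by linear_combination k0 - k1
      exact mul_left_cancel₀ hc hmul
  have hA0lin := lin_of_add hA0.continuous add0
  refine ⟨A0 1, fun τ => by rw [hA0lin τ], fun hc => ?_⟩
  set c0 := A0 1 with hc0
  -- A3 relation
  have add3 : ∀ τ σ : ℝ, A3 (τ + σ) = A3 τ + A3 σ - c0 * σ * τ := by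
    intro τ σ
    have k0 := key 0 τ σ
    have e1 := hA0lin (τ + σ)
    have e2 := hA0lin τ
    have e3 := hA0lin σ
    have hmul : c * A3 (τ + σ) = c * (A3 τ + A3 σ - c0 * σ * τ) := by
      linear_combination -k0 + e1 - e2 - (1 + c * τ) * e3
    exact mul_left_cancel₀ hc hmul
  set B : ℝ → ℝ := fun τ => A3 τ + c0 / 2 * τ ^ 2 with hB
  have hBc : Continuous B :=
    hA3.continuous.add (continuous_const.mul (continuous_pow 2))
  have addB : ∀ x y : ℝ, B (x + y) = B x + B y := by
    intro x y
    simp only [hB]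
    rw [add3 x y]; ring
  have hBlin := lin_of_add hBc addB
  have hB1 : B 1 = A3 1 + c0 / 2 := by simp [hB]
  refine ⟨B 1, μ 0, fun τ => ?_, fun w => ?_⟩
  · have hτ := hBlin τ
    simp only [hB] at hτ
    linear_combination hτ - τ * hB1
  · have hw := h 0 w
    have e1 : (0 : ℝ) - w = -w := by ring
    rw [e1] at hw
    have hA0w := hA0lin (-w)
    have hA3w : A3 (-w) = -(c0 / 2) * (-w) ^ 2 + B 1 * (-w) := by
      have hτ := hBlin (-w)
      simp only [hB] at hτ
      linear_combination hτ + w * hB1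
    rw [hA0w, hA3w] at hw
    linear_combination hw
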